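/- Let K ⊆ E be a regular cone with dual cone K*, and let F be a ν-normal barrier for K. The following three statements are equivalent: (1) F has negative curvature, i.e. for every x ∈ int K and every h ∈ K, the self-adjoint operator D³F(x)[h] is negative semidefinite (D³F(x)[h,u,u] ≤ 0 for all u ∈ E); (2) for every x ∈ int K and every h ∈ E, −D³F(x)[h,h] ∈ K*; (3) for every x ∈ int K and every h ∈ E with x + h ∈ int K, one has ∇²F(x)h − (∇F(x+h) − ∇F(x)) ∈ K*. -/

import Mathlib

open Set Filter Topology RealInnerProductSpace

noncomputable section

/-- The dual cone of a set `K` in a real inner product space. -/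
def dualConeSet {E : Type*} [NormedAddCommGroup E] [InnerProductSpace ℝ E] (K : Set E) :
    Set E :=
  {s : E | ∀ x ∈ K, 0 ≤ ⟪s, x⟫}

/-- A regular cone: closed, convex, pointed, with nonempty interior. -/
structure IsRegularCone {E : Type*} [NormedAddCommGroup E] [InnerProductSpace ℝ E]
    (K : Set E) : Prop where
  isClosed : IsClosed K
  convex : Convex ℝ K
  smul_mem : ∀ ⦃x : E⦄, x ∈ K → ∀ ⦃t : ℝ⦄, 0 ≤ t → t • x ∈ K
  pointed : ∀ ⦃x : E⦄, x ∈ K → -x ∈ K → x = 0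
  interior_nonempty : (interior K).Nonempty

/-- The Hessian of `f` at `x`, as a continuous linear map (the derivative of the gradient). -/
def hess {E : Type*} [NormedAddCommGroup E] [InnerProductSpace ℝ E] [CompleteSpace E]
    (f : E → ℝ) (x : E) : E →L[ℝ] E :=
  fderiv ℝ (gradient f) x

/-- A ν-normal barrier for the cone `K`: C³, convex, with positive definite Hessians on
`int K`, self-concordant, and ν-logarithmically homogeneous. -/
structure IsNormalBarrier {E : Type*} [NormedAddCommGroup E] [InnerProductSpace ℝ E]
    [CompleteSpace E] (K : Set E) (F : E → ℝ) (ν : ℝ) : Prop where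
  one_le_nu : 1 ≤ ν
  smooth : ContDiffOn ℝ 3 F (interior K)
  convexOn : ConvexOn ℝ (interior K) F
  hess_posdef : ∀ x ∈ interior K, ∀ h : E, h ≠ 0 → 0 < ⟪hess F x h, h⟫
  selfConcordant : ∀ x ∈ interior K, ∀ h : E,
    |iteratedFDeriv ℝ 3 F x ![h, h, h]| ≤ 2 * ⟪hess F x h, h⟫ ^ ((3 : ℝ) / 2)
  logHom : ∀ x ∈ interior K, ∀ τ : ℝ, 0 < τ → F (τ • x) = F x - ν * Real.log τ

section NCHelpers

set_option linter.unusedSectionVars false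

variable {E : Type*} [NormedAddCommGroup E] [InnerProductSpace ℝ E] [FiniteDimensional ℝ E]

private lemma NC_le_of_deriv_nonneg {f f' : ℝ → ℝ} {a b : ℝ}
    (hd : ∀ t ∈ Set.Icc a b, HasDerivAt f (f' t) t)
    (h' : ∀ t ∈ Set.Icc a b, 0 ≤ f' t) (hab : a ≤ b) : f a ≤ f b := by
  have hm : MonotoneOn f (Set.Icc a b) :=
    monotoneOn_of_deriv_nonneg (convex_Icc a b)
      (fun t ht => (hd t ht).continuousAt.continuousWithinAt)
      (fun t ht => by
        have ht' : t ∈ Set.Icc a b := Set.Ioo_subset_Icc_self (by rwa [interior_Icc] at ht)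
        exact ((hd t ht').differentiableAt).differentiableWithinAt)
      (fun t ht => by
        have ht' : t ∈ Set.Icc a b := Set.Ioo_subset_Icc_self (by rwa [interior_Icc] at ht)
        rw [(hd t ht').deriv]; exact h' t ht')
  exact hm (Set.left_mem_Icc.2 hab) (Set.right_mem_Icc.2 hab) hab

private lemma NC_inner_hess {D : Set E} (hD : IsOpen D) {F : E → ℝ}
    (hF : ContDiffOn ℝ 3 F D) {y : E} (hy : y ∈ D) (h u : E) :
    ⟪hess F y h, u⟫ = iteratedFDeriv ℝ 2 F y ![h, u] := by
  have hdF : DifferentiableAt ℝ (fderiv ℝ F) y :=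
    ((hF.fderiv_of_isOpen (m := 2) hD (by norm_num)).differentiableOn
      (by norm_num)).differentiableAt (hD.mem_nhds hy)
  set A := fderiv ℝ (fderiv ℝ F) y with hA
  have hgrad : HasFDerivAt (gradient F)
      (((InnerProductSpace.toDual ℝ E).symm.toContinuousLinearEquiv :
        (E →L[ℝ] ℝ) ≃L[ℝ] E).toContinuousLinearMap.comp A) y :=
    ((InnerProductSpace.toDual ℝ
      E).symm.toContinuousLinearEquiv.toContinuousLinearMap.hasFDerivAt).comp y hdF.hasFDerivAt
  have hh : hess F y = _ := hgrad.fderiv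
  rw [hh]
  rw [iteratedFDeriv_two_apply]
  simp only [ContinuousLinearMap.coe_comp', Function.comp_apply, Matrix.cons_val_zero,
    Matrix.cons_val_one, Matrix.head_cons]
  exact InnerProductSpace.toDual_symm_apply

private lemma NC_diff2 {D : Set E} (hD : IsOpen D) {F : E → ℝ} (hF : ContDiffOn ℝ 3 F D)
    {y : E} (hy : y ∈ D) : DifferentiableAt ℝ (iteratedFDeriv ℝ 2 F) y := by
  have h1 : DifferentiableOn ℝ (iteratedFDerivWithin ℝ 2 F D) D :=
    hF.differentiableOn_iteratedFDerivWithin (by norm_num) hD.uniqueDiffOn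
  have h2 : (iteratedFDeriv ℝ 2 F) =ᶠ[𝓝 y] (iteratedFDerivWithin ℝ 2 F D) :=
    Filter.eventually_of_mem (hD.mem_nhds hy)
      (fun z hz => (iteratedFDerivWithin_of_isOpen 2 hD hz).symm)
  exact ((h1 y hy).differentiableAt (hD.mem_nhds hy)).congr_of_eventuallyEq h2

private lemma NC_cont3 {D : Set E} (hD : IsOpen D) {F : E → ℝ} (hF : ContDiffOn ℝ 3 F D)
    {y : E} (hy : y ∈ D) : ContinuousAt (iteratedFDeriv ℝ 3 F) y := by
  have h1 : ContinuousOn (iteratedFDerivWithin ℝ 3 F D) D :=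
    hF.continuousOn_iteratedFDerivWithin le_rfl hD.uniqueDiffOn
  have h2 : (iteratedFDeriv ℝ 3 F) =ᶠ[𝓝 y] (iteratedFDerivWithin ℝ 3 F D) :=
    Filter.eventually_of_mem (hD.mem_nhds hy)
      (fun z hz => (iteratedFDerivWithin_of_isOpen 3 hD hz).symm)
  exact ((h1 y hy).continuousAt (hD.mem_nhds hy)).congr h2.symm

private lemma NC_curve (x h : E) (t : ℝ) : HasDerivAt (fun s : ℝ => x + s • h) h t := by
  simpa using ((hasDerivAt_id t).smul_const h).const_add x

private lemma NC_hasDerivAt_2 {D : Set E} (hD : IsOpen D) {F : E → ℝ}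
    (hF : ContDiffOn ℝ 3 F D) (x h u : E) {t : ℝ} (ht : x + t • h ∈ D) :
    HasDerivAt (fun s : ℝ => iteratedFDeriv ℝ 2 F (x + s • h) ![h, u])
      (iteratedFDeriv ℝ 3 F (x + t • h) ![h, h, u]) t := by
  have hd2 := (NC_diff2 hD hF ht).hasFDerivAt
  have happ := (ContinuousMultilinearMap.apply ℝ (fun _ : Fin 2 => E) ℝ ![h, u]).hasFDerivAt
    (x := iteratedFDeriv ℝ 2 F (x + t • h))
  exact (happ.comp _ hd2).comp_hasDerivAt t (NC_curve x h t)

private lemma NC_hasDerivAt_grad {D : Set E} (hD : IsOpen D) {F : E → ℝ}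
    (hF : ContDiffOn ℝ 3 F D) (x h u : E) {t : ℝ} (ht : x + t • h ∈ D) :
    HasDerivAt (fun s : ℝ => ⟪gradient F (x + s • h), u⟫)
      (iteratedFDeriv ℝ 2 F (x + t • h) ![h, u]) t := by
  have hdF : DifferentiableAt ℝ (fderiv ℝ F) (x + t • h) :=
    ((hF.fderiv_of_isOpen (m := 2) hD (by norm_num)).differentiableOn
      (by norm_num)).differentiableAt (hD.mem_nhds ht)
  have happ := (ContinuousLinearMap.apply ℝ ℝ u).hasFDerivAt (x := fderiv ℝ F (x + t • h))
  have H := (happ.comp _ hdF.hasFDerivAt).comp_hasDerivAt t (NC_curve x h t)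
  have heq : (fun s : ℝ => (fderiv ℝ F (x + s • h)) u)
      = fun s : ℝ => ⟪gradient F (x + s • h), u⟫ := by
    funext s
    exact (InnerProductSpace.toDual_symm_apply).symm
  rw [← heq]
  refine H.congr_deriv ?_
  rw [iteratedFDeriv_two_apply]
  simp

private lemma NC_three {F : E → ℝ} (x : E) (m : Fin 3 → E) :
    iteratedFDeriv ℝ 3 F x m
      = fderiv ℝ (fderiv ℝ (fderiv ℝ F)) x (m 0) (m 1) (m 2) := by
  rw [iteratedFDeriv_succ_apply_right, iteratedFDeriv_two_apply]
  rfl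

private lemma NC_symm12 {D : Set E} (hD : IsOpen D) {F : E → ℝ} (hF : ContDiffOn ℝ 3 F D)
    {x : E} (hx : x ∈ D) (a b c : E) :
    iteratedFDeriv ℝ 3 F x ![a, b, c] = iteratedFDeriv ℝ 3 F x ![b, a, c] := by
  have hx3 : ContDiffAt ℝ 3 F x := hF.contDiffAt (hD.mem_nhds hx)
  have h2 : ContDiffAt ℝ 2 (fderiv ℝ F) x := hx3.fderiv_right (by norm_num)
  have hs := h2.isSymmSndFDerivAt (by norm_num)
  rw [NC_three, NC_three]
  simp only [Matrix.cons_val_zero, Matrix.cons_val_one, Matrix.head_cons, Matrix.cons_val_two,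
    Matrix.tail_cons]
  rw [hs a b]

private lemma NC_symm23 {D : Set E} (hD : IsOpen D) {F : E → ℝ} (hF : ContDiffOn ℝ 3 F D)
    {x : E} (hx : x ∈ D) (a b c : E) :
    iteratedFDeriv ℝ 3 F x ![a, b, c] = iteratedFDeriv ℝ 3 F x ![a, c, b] := by
  have key : ∀ v w : E, (fderiv ℝ (iteratedFDeriv ℝ 2 F) x a) ![v, w]
      = fderiv ℝ (fun y => iteratedFDeriv ℝ 2 F y ![v, w]) x a := by
    intro v w
    have happ := (ContinuousMultilinearMap.apply ℝ (fun _ : Fin 2 => E) ℝ ![v, w]).hasFDerivAt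
      (x := iteratedFDeriv ℝ 2 F x)
    have H := happ.comp x (NC_diff2 hD hF hx).hasFDerivAt
    have H' : fderiv ℝ (fun y => iteratedFDeriv ℝ 2 F y ![v, w]) x
        = (ContinuousMultilinearMap.apply ℝ (fun _ : Fin 2 => E) ℝ ![v, w]).comp
          (fderiv ℝ (iteratedFDeriv ℝ 2 F) x) := H.fderiv
    rw [H']
    rfl
  have hsym : (fun y => iteratedFDeriv ℝ 2 F y ![b, c])
      =ᶠ[𝓝 x] (fun y => iteratedFDeriv ℝ 2 F y ![c, b]) := by
    filter_upwards [hD.mem_nhds hx] with z hz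
    have hz2 : ContDiffAt ℝ 3 F z := hF.contDiffAt (hD.mem_nhds hz)
    have hs := hz2.isSymmSndFDerivAt (by norm_num)
    rw [iteratedFDeriv_two_apply, iteratedFDeriv_two_apply]
    simp only [Matrix.cons_val_zero, Matrix.cons_val_one, Matrix.head_cons]
    exact hs b c
  rw [iteratedFDeriv_succ_apply_left, iteratedFDeriv_succ_apply_left]
  have h1 : Fin.tail ![a, b, c] = ![b, c] := rfl
  have h2 : Fin.tail ![a, c, b] = ![c, b] := rfl
  have h3 : (![a, b, c] : Fin 3 → E) 0 = a := rfl
  have h4 : (![a, c, b] : Fin 3 → E) 0 = a := rfl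
  rw [h1, h2, h3, h4, key b c, key c b, hsym.fderiv_eq]

end NCHelpers

/-- Theorem `th-NC`: three equivalent characterizations of negative
curvature of a normal barrier. -/
theorem negative_curvature_characterizations {E : Type*} [NormedAddCommGroup E]
    [InnerProductSpace ℝ E] [FiniteDimensional ℝ E]
    (K : Set E) (hK : IsRegularCone K) (F : E → ℝ) (ν : ℝ)
    (hF : IsNormalBarrier K F ν) :
    ((∀ x ∈ interior K, ∀ h ∈ K, ∀ u : E, iteratedFDeriv ℝ 3 F x ![h, u, u] ≤ 0) ↔
      (∀ x ∈ interior K, ∀ h : E, ∀ u ∈ K, iteratedFDeriv ℝ 3 F x ![h, h, u] ≤ 0)) ∧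
    ((∀ x ∈ interior K, ∀ h : E, ∀ u ∈ K, iteratedFDeriv ℝ 3 F x ![h, h, u] ≤ 0) ↔
      (∀ x ∈ interior K, ∀ h : E, x + h ∈ interior K →
        hess F x h - (gradient F (x + h) - gradient F x) ∈ dualConeSet K)) := by
  have hD : IsOpen (interior K) := isOpen_interior
  have hF3 : ContDiffOn ℝ 3 F (interior K) := hF.smooth
  have hconv : Convex ℝ (interior K) := hK.convex.interior
  have hseg : ∀ {x h : E}, x ∈ interior K → x + h ∈ interior K → ∀ t ∈ Icc (0:ℝ) 1,
      x + t • h ∈ interior K := by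
    intro x h hx hxh t ht
    have h1 : (1 - t) • x + t • (x + h) ∈ interior K :=
      hconv hx hxh (by linarith [ht.2]) ht.1 (by ring)
    have h2 : (1 - t) • x + t • (x + h) = x + t • h := by module
    rwa [h2] at h1
  constructor
  · constructor
    · intro H1 x hx h u hu
      rw [NC_symm23 hD hF3 hx h h u, NC_symm12 hD hF3 hx h u h]
      exact H1 x hx u hu h
    · intro H2 x hx h hh u
      rw [NC_symm12 hD hF3 hx h u u, NC_symm23 hD hF3 hx u h u]
      exact H2 x hx u h hh
  · constructor
    · -- (2) → (3)
      intro H2 x hx h hxh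
      have hmem : ∀ t ∈ Icc (0:ℝ) 1, x + t • h ∈ interior K := hseg hx hxh
      intro u hu
      set a := iteratedFDeriv ℝ 2 F x ![h, u] with ha
      have hdec : ∀ t ∈ Icc (0:ℝ) 1, iteratedFDeriv ℝ 2 F (x + t • h) ![h, u] ≤ a := by
        intro t ht
        have key := NC_le_of_deriv_nonneg
          (f := fun s : ℝ => -(iteratedFDeriv ℝ 2 F (x + s • h) ![h, u]))
          (f' := fun s : ℝ => -(iteratedFDeriv ℝ 3 F (x + s • h) ![h, h, u]))
          (a := 0) (b := t)
          (fun s hs => (NC_hasDerivAt_2 hD hF3 x h u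
            (hmem s ⟨hs.1, hs.2.trans ht.2⟩)).neg)
          (fun s hs => neg_nonneg.2 (H2 _ (hmem s ⟨hs.1, hs.2.trans ht.2⟩) h u hu))
          ht.1
        simp only [zero_smul, add_zero] at key
        rw [← ha] at key
        linarith
      have key := NC_le_of_deriv_nonneg
        (f := fun t : ℝ => t * a - ⟪gradient F (x + t • h), u⟫)
        (f' := fun t : ℝ => a - iteratedFDeriv ℝ 2 F (x + t • h) ![h, u])
        (a := 0) (b := 1)
        (fun t ht => by
          have h1 : HasDerivAt (fun t : ℝ => t * a) a t := by
            simpa using (hasDerivAt_id t).mul_const a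
          exact h1.sub (NC_hasDerivAt_grad hD hF3 x h u (hmem t ht)))
        (fun t ht => by linarith [hdec t ht]) zero_le_one

      show 0 ≤ ⟪hess F x h - (gradient F (x + h) - gradient F x), u⟫
      rw [inner_sub_left, inner_sub_left, NC_inner_hess hD hF3 hx h u]
      simp only [zero_smul, add_zero, one_smul, zero_mul, one_mul] at key
      rw [← ha]
      linarith
    · -- (3) → (2)
      intro H3 x hx h u hu
      by_contra hcon
      push_neg at hcon
      set c := iteratedFDeriv ℝ 3 F x ![h, h, u] with hcdef
      have hc : 0 < c := hcon
      have hγ : Continuous (fun t : ℝ => x + t • h) := by continuity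
      have hγ0 : x + (0:ℝ) • h = x := by simp
      have hθ : ContinuousAt
          (fun t : ℝ => iteratedFDeriv ℝ 3 F (x + t • h) ![h, h, u]) 0 := by
        have h2 : ContinuousAt (fun t : ℝ => iteratedFDeriv ℝ 3 F (x + t • h)) 0 := by
          apply ContinuousAt.comp (x := (0:ℝ))
          · rw [hγ0]; exact NC_cont3 hD hF3 hx
          · exact hγ.continuousAt
        exact ((ContinuousMultilinearMap.apply ℝ (fun _ : Fin 3 => E) ℝ
          ![h, h, u]).continuous.continuousAt).comp h2
      have hev : ∀ᶠ t : ℝ in 𝓝 0, x + t • h ∈ interior K ∧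
          c / 2 < iteratedFDeriv ℝ 3 F (x + t • h) ![h, h, u] := by
        have e1 : ∀ᶠ t : ℝ in 𝓝 0, x + t • h ∈ interior K := by
          have : (fun t : ℝ => x + t • h) ⁻¹' interior K ∈ 𝓝 (0:ℝ) :=
            hγ.continuousAt.preimage_mem_nhds (by rw [hγ0]; exact hD.mem_nhds hx)
          exact this
        have e2 : ∀ᶠ t : ℝ in 𝓝 0,
            c / 2 < iteratedFDeriv ℝ 3 F (x + t • h) ![h, h, u] := by
          have hmem2 : Ioi (c/2) ∈ 𝓝 (iteratedFDeriv ℝ 3 F (x + (0:ℝ) • h) ![h, h, u]) := by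
            rw [hγ0, ← hcdef]
            exact Ioi_mem_nhds (by linarith)
          exact hθ.preimage_mem_nhds hmem2
        exact e1.and e2
      obtain ⟨ε, hε, hball⟩ := Metric.eventually_nhds_iff.mp hev
      set δ := ε/2 with hδdef
      have hδ : 0 < δ := by positivity
      have hmem : ∀ t ∈ Icc (0:ℝ) δ, x + t • h ∈ interior K ∧
          c / 2 < iteratedFDeriv ℝ 3 F (x + t • h) ![h, h, u] := by
        intro t ht
        apply hball
        rw [Real.dist_eq, sub_zero]
        have h1 : |t| ≤ δ := abs_le.2 ⟨by linarith [ht.1], ht.2⟩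
        have h2 : δ < ε := by rw [hδdef]; linarith
        linarith
      set a := iteratedFDeriv ℝ 2 F x ![h, u] with ha
      have hstep : ∀ t ∈ Icc (0:ℝ) δ,
          a + c/2 * t ≤ iteratedFDeriv ℝ 2 F (x + t • h) ![h, u] := by
        intro t ht
        have key := NC_le_of_deriv_nonneg
          (f := fun s : ℝ => iteratedFDeriv ℝ 2 F (x + s • h) ![h, u] - c/2 * s)
          (f' := fun s : ℝ => iteratedFDeriv ℝ 3 F (x + s • h) ![h, h, u] - c/2)
          (a := 0) (b := t)
          (fun s hs => (NC_hasDerivAt_2 hD hF3 x h u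
              (hmem s ⟨hs.1, hs.2.trans ht.2⟩).1).sub
            (by simpa using (hasDerivAt_id s).const_mul (c/2)))
          (fun s hs => by linarith [(hmem s ⟨hs.1, hs.2.trans ht.2⟩).2])
          ht.1
        simp only [zero_smul, add_zero, mul_zero, sub_zero] at key
        rw [← ha] at key
        linarith
      have hp := NC_le_of_deriv_nonneg
        (f := fun t : ℝ => ⟪gradient F (x + t • h), u⟫ - t * a - c/4 * t^2)
        (f' := fun t : ℝ => iteratedFDeriv ℝ 2 F (x + t • h) ![h, u] - a - c/4 * (2*t))
        (a := 0) (b := δ)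
        (fun t ht => by
          have h1 : HasDerivAt (fun t : ℝ => t * a) a t := by
            simpa using (hasDerivAt_id t).mul_const a
          have h2 : HasDerivAt (fun t : ℝ => c/4 * t^2) (c/4 * (2*t)) t := by
            have := (hasDerivAt_pow 2 t).const_mul (c/4)
            simpa using this
          exact ((NC_hasDerivAt_grad hD hF3 x h u (hmem t ht).1).sub h1).sub h2)
        (fun t ht => by
          have e : c/4 * (2*t) = c/2 * t := by ring
          rw [e]
          linarith [hstep t ht])
        hδ.le
      simp only [zero_smul, add_zero, zero_mul, sub_zero, mul_zero, ne_eq,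
        OfNat.ofNat_ne_zero, not_false_eq_true, zero_pow] at hp
      have hdual := H3 x hx (δ • h) (by
        have := (hmem δ ⟨hδ.le, le_rfl⟩).1
        exact this)
      have hval : 0 ≤ ⟪hess F x (δ • h) - (gradient F (x + δ • h) - gradient F x), u⟫ :=
        hdual u hu
      rw [inner_sub_left, inner_sub_left] at hval
      have h5 : ⟪hess F x (δ • h), u⟫ = δ * a := by
        rw [map_smul, real_inner_smul_left, NC_inner_hess hD hF3 hx h u, ha]
      rw [h5] at hval
      have hδ2 : 0 < c/4 * δ^2 := by positivity
      linarith
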